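/- arXiv:2312.01424 — 2 statements merged into one kernel-verified Lean document; each statement's English description precedes it below -/
import Mathlib

section
/- Soundness of the neighbor-pruning rule: let p be a walk from s of length ℓ ending at vertex u, and let v be an out-neighbor of u (i.e., E u v holds). If there exists a walk q from s to t of length at most k such that the list of vertices of p followed by v is a prefix of the vertex list of q, then ℓ + 1 + dist(v, t) ≤ k; equivalently, ℓ + dist(v, t) < k. -/
variable {V : Type*}

/-- A walk from `u` to `v`: a nonempty list of vertices starting at `u`, ending at `v`,
with consecutive vertices joined by edges of `E`. Its length (number of hops) is
`p.length - 1`. -/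
def IsWalkFrom (E : V → V → Prop) (u v : V) (p : List V) : Prop :=
  p.Chain' E ∧ p.head? = some u ∧ p.getLast? = some v

/-- A walk starting at `u` (with arbitrary end). -/
def IsWalkStart (E : V → V → Prop) (u : V) (p : List V) : Prop :=
  p.Chain' E ∧ p.head? = some u

/-- Shortest-walk distance from `u` to `v`, in `ℕ∞` (`⊤` if there is no walk). -/
noncomputable def gdist (E : V → V → Prop) (u v : V) : ℕ∞ :=
  sInf ((fun p : List V => ((p.length - 1 : ℕ) : ℕ∞)) '' {p | IsWalkFrom E u v p})

/-- Concatenation of two walks sharing the junction vertex: append `p₂` after `p₁`,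
identifying the shared vertex once. -/
def pconcat (p₁ p₂ : List V) : List V := p₁ ++ p₂.tail

/-- The HC-s path set `P_s(s, k)`: simple paths starting at `s` of length `< k`. -/
def HCsPathSet (E : V → V → Prop) (s : V) (k : ℕ) : Set (List V) :=
  {p | IsWalkStart E s p ∧ p.Nodup ∧ p.length - 1 < k}

/-- Soundness of the neighbor-pruning rule: if the prefix `p ++ [v]` extends to a walk
from `s` to `t` of length at most `k`, then `ℓ + 1 + dist(v, t) ≤ k`, equivalently
`ℓ + dist(v, t) < k`. -/
theorem stmt_3 (E : V → V → Prop) (s t u v : V) (p : List V) (ℓ k : ℕ)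
    (hp : IsWalkFrom E s u p) (hlen : p.length = ℓ + 1) (he : E u v)
    (hq : ∃ q : List V, IsWalkFrom E s t q ∧ q.length - 1 ≤ k ∧ (p ++ [v]) <+: q) :
    (ℓ : ℕ∞) + 1 + gdist E v t ≤ (k : ℕ∞) ∧ (ℓ : ℕ∞) + gdist E v t < (k : ℕ∞) := by
  obtain ⟨q, ⟨hc, hh, hl⟩, hqk, r, hr⟩ := hq
  subst hr
  have hsuf : IsWalkFrom E v t (v :: r) := by
    refine ⟨hc.suffix ⟨p, by simp⟩, rfl, ?_⟩
    rw [← hl, show p ++ [v] ++ r = p ++ (v :: r) by simp]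
    exact (List.getLast?_append_of_ne_nil p (by simp)).symm
  have hle' : gdist E v t ≤ (r.length : ℕ∞) := by
    have hmem : (((v :: r).length - 1 : ℕ) : ℕ∞) ∈
        ((fun p : List V => ((p.length - 1 : ℕ) : ℕ∞)) '' {p | IsWalkFrom E v t p}) :=
      ⟨v :: r, hsuf, rfl⟩
    simpa [gdist] using csInf_le (OrderBot.bddBelow _) hmem
  have hq1 : (p ++ [v] ++ r).length - 1 = ℓ + 1 + r.length := by simp [hlen]
  rw [hq1] at hqk
  have h1 : (ℓ : ℕ∞) + 1 + gdist E v t ≤ (k : ℕ∞) := by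
    calc (ℓ : ℕ∞) + 1 + gdist E v t ≤ (ℓ : ℕ∞) + 1 + (r.length : ℕ∞) :=
          add_le_add_right hle' _
      _ = ((ℓ + 1 + r.length : ℕ) : ℕ∞) := by push_cast; ring
      _ ≤ (k : ℕ∞) := by exact_mod_cast hqk
  refine ⟨h1, ?_⟩
  have h2 : (ℓ : ℕ∞) + gdist E v t ≤ (k : ℕ∞) :=
    le_trans (add_le_add_left (by simp : (ℓ : ℕ∞) ≤ (ℓ : ℕ∞) + 1) _) h1
  have hne : (ℓ : ℕ∞) + gdist E v t ≠ ⊤ :=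
    (lt_of_le_of_lt h2 (ENat.coe_lt_top k)).ne
  rw [← ENat.add_one_le_iff hne]
  calc (ℓ : ℕ∞) + gdist E v t + 1 = (ℓ : ℕ∞) + 1 + gdist E v t := by ring
    _ ≤ (k : ℕ∞) := h1
end

section
/- Extendability of shared sub-paths (Lemma 4.3, walk form): let s, t be vertices, k a natural number, a and b vertices, and k_a ≥ 1, k_b ≥ 1 natural numbers such that dist(s, a) + k_a ≤ ⌈k/2⌉ and dist(b, t) + k_b ≤ ⌊k/2⌋ (in ℕ∞, so in particular dist(s,a) and dist(b,t) are finite). Then for every walk p' from a to b of length at most k_a + k_b − 2, there exists a walk p from s to t of length at most k such that the vertex list of p' occurs as a contiguous sublist of the vertex list of p. -/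
variable {V : Type*}

lemma exists_walk_le (E : V → V → Prop) (u v : V) (m : ℕ) (h : gdist E u v ≤ (m : ℕ∞)) :
    ∃ p, IsWalkFrom E u v p ∧ p.length - 1 ≤ m := by
  have hlt : gdist E u v < ((m + 1 : ℕ) : ℕ∞) :=
    lt_of_le_of_lt h (by exact_mod_cast Nat.lt_succ_self m)
  unfold gdist at hlt
  rw [sInf_lt_iff] at hlt
  obtain ⟨y, hy, hylt⟩ := hlt
  obtain ⟨p, hp, rfl⟩ := hy
  refine ⟨p, hp, ?_⟩
  simp only at hylt
  exact Nat.lt_succ_iff.mp (by exact_mod_cast hylt)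

lemma walk_concat {E : V → V → Prop} {u v w : V} {p1 p2 : List V}
    (h1 : IsWalkFrom E u v p1) (h2 : IsWalkFrom E v w p2) :
    IsWalkFrom E u w (p1 ++ p2.tail) ∧
      (p1 ++ p2.tail).length - 1 = (p1.length - 1) + (p2.length - 1) := by
  obtain ⟨hc1, hh1, hl1⟩ := h1
  obtain ⟨hc2, hh2, hl2⟩ := h2
  have hp1ne : p1 ≠ [] := by rintro rfl; simp at hh1
  obtain ⟨rest, rfl⟩ : ∃ rest, p2 = v :: rest := by
    cases p2 with
    | nil => simp at hh2
    | cons x xs =>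
      have hx : x = v := by simpa using hh2
      exact ⟨xs, by rw [hx]⟩
  rw [show List.Chain' E (v :: rest) = List.IsChain E (v :: rest) from rfl, List.isChain_cons] at hc2
  constructor
  · refine ⟨?_, ?_, ?_⟩
    · refine List.IsChain.append hc1 hc2.2 ?_
      intro x hx y hy
      rw [hl1] at hx
      simp only [Option.mem_def, Option.some.injEq] at hx
      subst hx
      exact hc2.1 y hy
    · rw [List.head?_append_of_ne_nil _ hp1ne]
      exact hh1
    · simp only [List.tail_cons]
      cases rest with
      | nil =>
        have : w = v := by simpa using hl2.symm
        simpa [this] using hl1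
      | cons y ys =>
        rw [List.getLast?_append_of_ne_nil _ (by simp)]
        simpa using hl2
  · have : 1 ≤ p1.length := List.length_pos_iff.mpr hp1ne
    simp only [List.tail_cons, List.length_append, List.length_cons]
    omega

/-- Extendability of shared sub-paths (Lemma 4.3, walk form): if
`dist(s, a) + k_a ≤ ⌈k/2⌉` and `dist(b, t) + k_b ≤ ⌊k/2⌋` (in `ℕ∞`) with
`k_a, k_b ≥ 1`, then every walk `p'` from `a` to `b` of length at most `k_a + k_b - 2`
occurs as a contiguous sublist of some walk `p` from `s` to `t` of length at most `k`. -/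
theorem stmt_9 (E : V → V → Prop) (s t a b : V) (k ka kb : ℕ)
    (hka : 1 ≤ ka) (hkb : 1 ≤ kb)
    (ha : gdist E s a + (ka : ℕ∞) ≤ (((k + 1) / 2 : ℕ) : ℕ∞))
    (hb : gdist E b t + (kb : ℕ∞) ≤ ((k / 2 : ℕ) : ℕ∞)) :
    ∀ p' : List V, IsWalkFrom E a b p' → p'.length - 1 ≤ ka + kb - 2 →
      ∃ p : List V, IsWalkFrom E s t p ∧ p.length - 1 ≤ k ∧ p' <:+: p := by
  intro p' hp' hlen
  -- extract finite distances
  obtain ⟨n1, hn1⟩ : ∃ n1 : ℕ, gdist E s a = (n1 : ℕ∞) := by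
    have : gdist E s a ≠ ⊤ := by
      intro h; rw [h] at ha; simp [top_add] at ha
    exact ⟨(gdist E s a).toNat, (ENat.coe_toNat this).symm⟩
  obtain ⟨n2, hn2⟩ : ∃ n2 : ℕ, gdist E b t = (n2 : ℕ∞) := by
    have : gdist E b t ≠ ⊤ := by
      intro h; rw [h] at hb; simp [top_add] at hb
    exact ⟨(gdist E b t).toNat, (ENat.coe_toNat this).symm⟩
  rw [hn1] at ha; rw [hn2] at hb
  have ha' : n1 + ka ≤ (k + 1) / 2 := by exact_mod_cast ha
  have hb' : n2 + kb ≤ k / 2 := by exact_mod_cast hb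
  obtain ⟨w1, hw1, hw1l⟩ := exists_walk_le E s a n1 (le_of_eq hn1)
  obtain ⟨w2, hw2, hw2l⟩ := exists_walk_le E b t n2 (le_of_eq hn2)
  obtain ⟨hmid, hmidlen⟩ := walk_concat hw1 hp'
  obtain ⟨hall, halllen⟩ := walk_concat hmid hw2
  refine ⟨w1 ++ p'.tail ++ w2.tail, hall, ?_, ?_⟩
  · rw [halllen, hmidlen]; omega
  · -- p' is an infix
    have hw1ne : w1 ≠ [] := by rintro rfl; exact absurd hw1.2.1 (by simp)
    have hp'head : ∃ rest, p' = a :: rest := by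
      cases p' with
      | nil => exact absurd hp'.2.1 (by simp)
      | cons x xs =>
        have hx : x = a := by simpa using hp'.2.1
        exact ⟨xs, by rw [hx]⟩
    obtain ⟨rest, hrest⟩ := hp'head
    have hw1last : w1 = w1.dropLast ++ [a] := by
      conv_lhs => rw [← List.dropLast_append_getLast hw1ne]
      congr 1
      have := hw1.2.2
      rw [List.getLast?_eq_getLast hw1ne] at this
      simpa using this
    refine ⟨w1.dropLast, w2.tail, ?_⟩
    rw [hrest]
    conv_rhs => rw [hw1last]
    simp
end
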